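/- For the variant two-agent 1D HK system with a(r)=1 for r≤1 and a(r)=0 for r>1, and initial condition with |x_{1,0}-x_{2,0}|=1, the function given by x_1(t)-x_2(t)=e^{-2t}(x_{1,0}-x_{2,0}), x_1(t)+x_2(t)=x_{1,0}+x_{2,0} is the unique Caratheodory solution. -/

import Mathlib

open Real Set MeasureTheory

private lemma hk_key (d : ℝ) (hd : |d| = 1) (u : ℝ → ℝ)
    (hu : ∀ t ≥ (0:ℝ), u t = d + 2 * ∫ s in (0:ℝ)..t,
      (if |u s| ≤ 1 then (1:ℝ) else 0) * (-u s)) :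
    ∀ t ≥ (0:ℝ), u t = Real.exp (-2 * t) * d := by
  set F : ℝ → ℝ := fun s => (if |u s| ≤ 1 then (1:ℝ) else 0) * (-u s) with hF
  have hu0 : u 0 = d := by simpa using hu 0 le_rfl
  have hFbd : ∀ s, |F s| ≤ 1 := by
    intro s
    by_cases h : |u s| ≤ 1
    · simp only [hF, if_pos h, one_mul, abs_neg]; exact h
    · simp [hF, if_neg h]
  -- uniqueness on [0, c'] assuming integrability up to c'
  have uniq : ∀ c' : ℝ, 0 ≤ c' → IntegrableOn F (Ioc 0 c') →
      ∀ t ∈ Icc (0:ℝ) c', u t = Real.exp (-2 * t) * d := by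
    intro c' hc'0 hInt
    have hII : ∀ t ∈ Icc (0:ℝ) c', IntervalIntegrable F volume 0 t := by
      intro t ht
      rw [intervalIntegrable_iff, uIoc_of_le ht.1]
      exact hInt.mono_set (Ioc_subset_Ioc le_rfl ht.2)
    have hIIc : IntervalIntegrable F volume 0 c' := hII c' (right_mem_Icc.2 hc'0)
    have hPcont : ContinuousOn (fun t => ∫ s in (0:ℝ)..t, F s) (Icc 0 c') := by
      have := intervalIntegral.continuousOn_primitive_interval' hIIc left_mem_uIcc
      rwa [uIcc_of_le hc'0] at this
    have hucont : ContinuousOn u (Icc 0 c') :=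
      (continuousOn_const.add (continuousOn_const.mul hPcont)).congr fun t ht => hu t ht.1
    -- |u| ≤ 1 on [0, c']
    have habs : ∀ t ∈ Icc (0:ℝ) c', |u t| ≤ 1 := by
      by_contra hcon
      push_neg at hcon
      obtain ⟨t, ht, hgt⟩ := hcon
      set A := Icc (0:ℝ) t ∩ u ⁻¹' (Icc (-1) 1) with hA
      have hsubc : Icc (0:ℝ) t ⊆ Icc 0 c' := Icc_subset_Icc le_rfl ht.2
      have hclosed : IsClosed A :=
        (hucont.mono hsubc).preimage_isClosed_of_isClosed isClosed_Icc isClosed_Icc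
      have h0A : (0:ℝ) ∈ A := by
        refine ⟨⟨le_rfl, ht.1⟩, ?_⟩
        simp only [mem_preimage, hu0]
        exact abs_le.1 hd.le
      have hbdd : BddAbove A := ⟨t, fun x hx => hx.1.2⟩
      set m := sSup A with hm
      have hmA : m ∈ A := hclosed.csSup_mem ⟨0, h0A⟩ hbdd
      have hm0 : 0 ≤ m := hmA.1.1
      have hmabs : |u m| ≤ 1 := abs_le.2 hmA.2
      have hm_lt : m < t := by
        rcases lt_or_eq_of_le hmA.1.2 with h | h
        · exact h
        · exact absurd (h ▸ hmabs) (not_le.2 hgt)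
      have hF0 : ∀ s ∈ Ioc m t, F s = 0 := by
        intro s hs
        have hnot : ¬ |u s| ≤ 1 := by
          intro hle
          have hsA : s ∈ A := ⟨⟨le_trans hm0 hs.1.le, hs.2⟩, abs_le.1 hle⟩
          exact absurd (le_csSup hbdd hsA) (not_le.2 hs.1)
        simp [hF, hnot]
      have h1 := hu t (le_trans ht.1 le_rfl)
      have h2 := hu m hm0
      have hsub : u t - u m = 2 * ∫ s in m..t, F s := by
        rw [h1, h2, ← intervalIntegral.integral_interval_sub_left
          (hII t (hsubc (right_mem_Icc.2 ht.1))) (hII m (hsubc ⟨hm0, hmA.1.2⟩))]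
        ring
      have hzero : (∫ s in m..t, F s) = 0 := by
        rw [intervalIntegral.integral_of_le hm_lt.le,
          setIntegral_congr_fun measurableSet_Ioc hF0]
        simp
      have : u t = u m := by rw [hzero, mul_zero] at hsub; linarith
      rw [this] at hgt
      exact absurd hmabs (not_le.2 hgt)
    -- the indicator is 1, so u solves the linear equation
    have hueq : ∀ t ∈ Icc (0:ℝ) c', u t = d - 2 * ∫ s in (0:ℝ)..t, u s := by
      intro t ht
      have heq : EqOn F (fun s => -u s) (uIcc 0 t) := by
        intro s hs
        rw [uIcc_of_le ht.1] at hs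
        have : |u s| ≤ 1 := habs s ⟨hs.1, le_trans hs.2 ht.2⟩
        simp [hF, this]
      rw [hu t ht.1, intervalIntegral.integral_congr heq, intervalIntegral.integral_neg]
      ring
    have huII : ∀ x ∈ Icc (0:ℝ) c', IntervalIntegrable u volume 0 x := by
      intro x hx
      apply ContinuousOn.intervalIntegrable
      rw [uIcc_of_le hx.1]
      exact hucont.mono (Icc_subset_Icc le_rfl hx.2)
    have hderiv : ∀ x ∈ Ico (0:ℝ) c', HasDerivWithinAt u (-2 * u x) (Ici x) x := by
      intro x hx
      have hxmem : Icc (0:ℝ) c' ∈ nhdsWithin x (Ioi x) := by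
        rw [mem_nhdsWithin]
        exact ⟨Iio c', isOpen_Iio, hx.2, fun y hy => ⟨le_trans hx.1 hy.2.le, hy.1.le⟩⟩
      have hmeas : StronglyMeasurableAtFilter u (nhdsWithin x (Ioi x)) volume :=
        ⟨Icc 0 c', hxmem, hucont.aestronglyMeasurable measurableSet_Icc⟩
      have hcw : ContinuousWithinAt u (Ioi x) x :=
        (hucont x ⟨hx.1, hx.2.le⟩).mono_of_mem_nhdsWithin hxmem
      have hP : HasDerivWithinAt (fun t => ∫ s in (0:ℝ)..t, u s) (u x) (Ici x) x :=
        intervalIntegral.integral_hasDerivWithinAt_right (huII x ⟨hx.1, hx.2.le⟩) hmeas hcw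
      have h2 : HasDerivWithinAt (fun t => d - 2 * ∫ s in (0:ℝ)..t, u s)
          (-2 * u x) (Ici x) x := by
        have := (hP.const_mul (2:ℝ)).const_sub d
        rw [show (-2:ℝ) * u x = -(2 * u x) by ring]
        exact this
      have hx' : Icc x c' ∈ nhdsWithin x (Ici x) := by
        rw [mem_nhdsWithin]
        exact ⟨Iio c', isOpen_Iio, hx.2, fun y hy => ⟨hy.2, hy.1.le⟩⟩
      have hevent : u =ᶠ[nhdsWithin x (Ici x)] (fun t => d - 2 * ∫ s in (0:ℝ)..t, u s) :=
        Filter.eventually_of_mem hx' fun y hy => hueq y ⟨le_trans hx.1 hy.1, hy.2⟩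
      exact h2.congr_of_eventuallyEq hevent (hueq x ⟨hx.1, hx.2.le⟩)
    -- the function exp(2t) * u t is constant
    intro t ht
    have hwcont : ContinuousOn (fun t => Real.exp (2*t) * u t) (Icc 0 c') :=
      ((Real.continuous_exp.comp (continuous_const.mul continuous_id)).continuousOn).mul hucont
    have hwderiv : ∀ x ∈ Ico (0:ℝ) c',
        HasDerivWithinAt (fun t => Real.exp (2*t) * u t) 0 (Ici x) x := by
      intro x hx
      have he : HasDerivAt (fun t : ℝ => Real.exp (2*t)) (Real.exp (2*x) * 2) x :=
        HasDerivAt.exp (by simpa using (hasDerivAt_id x).const_mul (2:ℝ))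
      have := he.hasDerivWithinAt.mul (hderiv x hx)
      have h0 : Real.exp (2*x) * 2 * u x + Real.exp (2*x) * (-2 * u x) = 0 := by ring
      exact h0 ▸ this
    have hw := constant_of_has_deriv_right_zero hwcont hwderiv t ht
    simp only [mul_zero, Real.exp_zero, one_mul, hu0] at hw
    have hne : Real.exp (2*t) ≠ 0 := Real.exp_ne_zero _
    have : u t = d / Real.exp (2*t) := by field_simp [mul_comm] at hw ⊢; linarith [hw]
    rw [this, show (-2:ℝ) * t = -(2*t) by ring, Real.exp_neg, div_eq_inv_mul]
  -- global argument
  intro T hT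
  set B := {t : ℝ | t ∈ Icc (0:ℝ) T ∧ IntegrableOn F (Ioc 0 t)} with hB
  have h0B : (0:ℝ) ∈ B := ⟨⟨le_rfl, hT⟩, by simp⟩
  have hbdd : BddAbove B := ⟨T, fun x hx => hx.1.2⟩
  set c := sSup B with hc
  have hc0 : 0 ≤ c := le_csSup hbdd h0B
  have hcT : c ≤ T := csSup_le ⟨0, h0B⟩ fun x hx => hx.1.2
  have hlt : ∀ t : ℝ, t < c → IntegrableOn F (Ioc 0 t) := by
    intro t htc
    obtain ⟨s, hsB, hts⟩ := exists_lt_of_lt_csSup ⟨0, h0B⟩ htc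
    exact hsB.2.mono_set (Ioc_subset_Ioc le_rfl hts.le)
  have hcB : IntegrableOn F (Ioc 0 c) := by
    rcases eq_or_lt_of_le hc0 with h | h
    · rw [← h]; simp
    · have hunion : (⋃ n : ℕ, Ioc (0:ℝ) (c - c/(n+1))) = Ioo 0 c := by
        ext x
        simp only [mem_iUnion, mem_Ioc, mem_Ioo]
        constructor
        · rintro ⟨n, h1, h2⟩
          refine ⟨h1, lt_of_le_of_lt h2 ?_⟩
          have : (0:ℝ) < c/(n+1) := by positivity
          linarith
        · rintro ⟨h1, h2⟩
          obtain ⟨n, hn⟩ := exists_nat_gt (c/(c - x))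
          have hcx : (0:ℝ) < c - x := by linarith
          have h3 : c < (n:ℝ) * (c - x) := (div_lt_iff₀ hcx).1 hn
          have h4 : c < ((n:ℝ)+1) * (c - x) := by nlinarith
          have h5 : c/((n:ℝ)+1) < c - x := by
            rw [div_lt_iff₀ (by positivity)]
            linarith [h4]
          exact ⟨n, h1, by linarith⟩
      have hIoo : IntegrableOn F (Ioo 0 c) := by
        constructor
        · rw [← hunion]
          refine aestronglyMeasurable_iUnion_iff.2 fun n => ?_
          have hne : 0 ≤ c - c/(n+1) := by
            have : c/((n:ℝ)+1) ≤ c := div_le_self hc0 (by norm_num)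
            linarith
          have hlt' : c - c/((n:ℝ)+1) < c := by
            have : (0:ℝ) < c/((n:ℝ)+1) := by positivity
            linarith
          exact (hlt _ hlt').aestronglyMeasurable
        · refine HasFiniteIntegral.restrict_of_bounded (C := 1) measure_Ioo_lt_top ?_
          exact ae_of_all _ fun s => by simpa [Real.norm_eq_abs] using hFbd s
      exact hIoo.congr_set_ae Ioo_ae_eq_Ioc.symm
  have huc : ∀ t ∈ Icc (0:ℝ) c, u t = Real.exp (-2*t) * d := uniq c hc0 hcB
  have hceT : c = T := by
    by_contra hne
    have hcltT : c < T := lt_of_le_of_ne hcT hne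
    have hconst : ∀ s : ℝ, c < s → s ≤ T → u s = d := by
      intro s hcs hsT
      have hs0 : (0:ℝ) ≤ s := le_trans hc0 hcs.le
      have hnotB : ¬ IntegrableOn F (Ioc 0 s) := by
        intro hI
        exact absurd (le_csSup hbdd ⟨⟨hs0, hsT⟩, hI⟩) (not_le.2 hcs)
      have hnotII : ¬ IntervalIntegrable F volume 0 s := by
        rw [intervalIntegrable_iff, uIoc_of_le hs0]; exact hnotB
      have := hu s hs0
      rw [intervalIntegral.integral_undef hnotII] at this
      simpa using this
    have hTB : IntegrableOn F (Ioc 0 T) := by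
      rw [← Ioc_union_Ioc_eq_Ioc hc0 hcT]
      refine hcB.union ?_
      have heq : EqOn F (fun _ => -d) (Ioc c T) := by
        intro s hs
        have h1 : u s = d := hconst s hs.1 hs.2
        simp [hF, h1, hd.le]
      rw [integrableOn_congr_fun heq measurableSet_Ioc]
      exact integrableOn_const measure_Ioc_lt_top.ne
    exact absurd (le_csSup hbdd ⟨⟨le_trans hc0 hcT, le_rfl⟩, hTB⟩) (not_le.2 hcltT)
  exact huc T ⟨hT, hceT.ge⟩

/-- For the variant two-agent 1D HK system with interaction active at distance exactly 1
(`a(r) = 1` for `r ≤ 1`, `0` for `r > 1`) and `|x₁₀ - x₂₀| = 1`, the function given by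
`x₁ - x₂ = e^{-2t}(x₁₀ - x₂₀)`, `x₁ + x₂ = x₁₀ + x₂₀` is the unique Caratheodory solution
(integral form): it solves the system, and every Caratheodory solution with this initial
condition satisfies these formulas. -/
theorem stmt_19 (a b : ℝ) (hab : |a - b| = 1) :
    (∀ y1 y2 : ℝ → ℝ,
      (∀ t, y1 t = ((a + b) + Real.exp (-2 * t) * (a - b)) / 2) →
      (∀ t, y2 t = ((a + b) - Real.exp (-2 * t) * (a - b)) / 2) →
      y1 0 = a ∧ y2 0 = b ∧
      (∀ t ≥ (0:ℝ), y1 t = y1 0 + ∫ s in (0:ℝ)..t,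
        (if |y1 s - y2 s| ≤ 1 then (1:ℝ) else 0) * (y2 s - y1 s)) ∧
      (∀ t ≥ (0:ℝ), y2 t = y2 0 + ∫ s in (0:ℝ)..t,
        (if |y1 s - y2 s| ≤ 1 then (1:ℝ) else 0) * (y1 s - y2 s))) ∧
    (∀ x1 x2 : ℝ → ℝ,
      x1 0 = a → x2 0 = b →
      (∀ t ≥ (0:ℝ), x1 t = x1 0 + ∫ s in (0:ℝ)..t,
        (if |x1 s - x2 s| ≤ 1 then (1:ℝ) else 0) * (x2 s - x1 s)) →
      (∀ t ≥ (0:ℝ), x2 t = x2 0 + ∫ s in (0:ℝ)..t,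
        (if |x1 s - x2 s| ≤ 1 then (1:ℝ) else 0) * (x1 s - x2 s)) →
      ∀ t ≥ (0:ℝ), x1 t - x2 t = Real.exp (-2 * t) * (a - b) ∧
        x1 t + x2 t = a + b) := by
  constructor
  · -- existence part
    intro y1 y2 hy1 hy2
    have hdiff : ∀ s, y1 s - y2 s = Real.exp (-2*s) * (a - b) := by
      intro s; rw [hy1, hy2]; ring
    have habs' : ∀ s, |y1 s - y2 s| = Real.exp (-2*s) := by
      intro s
      rw [hdiff, abs_mul, abs_of_pos (Real.exp_pos _), hab, mul_one]
    have hind : ∀ s : ℝ, 0 ≤ s → (if |y1 s - y2 s| ≤ 1 then (1:ℝ) else 0) = 1 := by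
      intro s hs
      rw [habs', if_pos]
      calc Real.exp (-2*s) ≤ Real.exp 0 := Real.exp_le_exp.2 (by linarith)
        _ = 1 := Real.exp_zero
    have hy10 : y1 0 = a := by rw [hy1 0]; simp [Real.exp_zero]
    have hy20 : y2 0 = b := by rw [hy2 0]; simp [Real.exp_zero]
    refine ⟨hy10, hy20, ?_, ?_⟩
    · intro t ht
      have hInt : (∫ s in (0:ℝ)..t, (if |y1 s - y2 s| ≤ 1 then (1:ℝ) else 0) * (y2 s - y1 s))
          = ∫ s in (0:ℝ)..t, -(Real.exp (-2*s) * (a-b)) := by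
        apply intervalIntegral.integral_congr
        intro s hs
        rw [uIcc_of_le ht] at hs
        show (if |y1 s - y2 s| ≤ 1 then (1:ℝ) else 0) * (y2 s - y1 s) = -(Real.exp (-2*s) * (a-b))
        rw [hind s hs.1, one_mul, show y2 s - y1 s = -(y1 s - y2 s) by ring, hdiff]
      have hEval : (∫ s in (0:ℝ)..t, -(Real.exp (-2*s) * (a-b)))
          = Real.exp (-2*t)*(a-b)/2 - Real.exp (-2*(0:ℝ))*(a-b)/2 := by
        apply intervalIntegral.integral_eq_sub_of_hasDerivAt
          (f := fun s => Real.exp (-2*s)*(a-b)/2)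
        · intro x _
          have h0 : HasDerivAt (fun s : ℝ => (-2:ℝ)*s) (-2:ℝ) x := by
            have := (hasDerivAt_id x).const_mul (-2:ℝ)
            rwa [mul_one] at this
          have h1 : HasDerivAt (fun s : ℝ => Real.exp (-2*s)) (Real.exp (-2*x) * (-2)) x :=
            h0.exp
          have := (h1.mul_const (a-b)).div_const 2
          rw [show -(Real.exp (-2*x) * (a-b)) = Real.exp (-2*x) * (-2) * (a-b) / 2 by ring]
          exact this
        · apply Continuous.intervalIntegrable
          fun_prop
      rw [hInt, hEval, hy1 t, hy10]
      simp only [mul_zero, neg_zero, Real.exp_zero, one_mul]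
      ring
    · intro t ht
      have hInt : (∫ s in (0:ℝ)..t, (if |y1 s - y2 s| ≤ 1 then (1:ℝ) else 0) * (y1 s - y2 s))
          = ∫ s in (0:ℝ)..t, Real.exp (-2*s) * (a-b) := by
        apply intervalIntegral.integral_congr
        intro s hs
        rw [uIcc_of_le ht] at hs
        show (if |y1 s - y2 s| ≤ 1 then (1:ℝ) else 0) * (y1 s - y2 s) = Real.exp (-2*s) * (a-b)
        rw [hind s hs.1, one_mul, hdiff]
      have hEval : (∫ s in (0:ℝ)..t, Real.exp (-2*s) * (a-b))
          = (-(Real.exp (-2*t)*(a-b)/2)) - (-(Real.exp (-2*(0:ℝ))*(a-b)/2)) := by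
        apply intervalIntegral.integral_eq_sub_of_hasDerivAt
          (f := fun s => -(Real.exp (-2*s)*(a-b)/2))
        · intro x _
          have h0 : HasDerivAt (fun s : ℝ => (-2:ℝ)*s) (-2:ℝ) x := by
            have := (hasDerivAt_id x).const_mul (-2:ℝ)
            rwa [mul_one] at this
          have h1 : HasDerivAt (fun s : ℝ => Real.exp (-2*s)) (Real.exp (-2*x) * (-2)) x :=
            h0.exp
          have := ((h1.mul_const (a-b)).div_const 2).neg
          convert this using 1
          · funext s; rfl
          · ring
        · apply Continuous.intervalIntegrable
          fun_prop
      rw [hInt, hEval, hy2 t, hy20]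
      simp only [mul_zero, neg_zero, Real.exp_zero, one_mul]
      ring
  · -- uniqueness part
    intro x1 x2 hx10 hx20 h1 h2
    intro t ht
    set u : ℝ → ℝ := fun s => x1 s - x2 s with hu_def
    have hneg : ∀ r : ℝ, (∫ s in (0:ℝ)..r, (if |x1 s - x2 s| ≤ 1 then (1:ℝ) else 0) * (x1 s - x2 s))
        = -∫ s in (0:ℝ)..r, (if |x1 s - x2 s| ≤ 1 then (1:ℝ) else 0) * (x2 s - x1 s) := by
      intro r
      rw [← intervalIntegral.integral_neg]
      congr 1
      funext s
      ring
    have hK : ∀ r ≥ (0:ℝ), u r = (a-b) + 2 * ∫ s in (0:ℝ)..r,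
        (if |u s| ≤ 1 then (1:ℝ) else 0) * (-u s) := by
      intro r hr
      have e1 := h1 r hr
      have e2 := h2 r hr
      rw [hneg r] at e2
      have heqf : (fun s => (if |u s| ≤ 1 then (1:ℝ) else 0) * (-u s))
          = fun s => (if |x1 s - x2 s| ≤ 1 then (1:ℝ) else 0) * (x2 s - x1 s) := by
        funext s
        simp only [hu_def]
        ring_nf
      rw [heqf]
      simp only [hu_def, hx10, hx20] at e1 e2 ⊢
      rw [e1, e2]
      ring
    have hkey := hk_key (a-b) hab u hK t ht
    refine ⟨hkey, ?_⟩
    have e1 := h1 t ht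
    have e2 := h2 t ht
    rw [hneg t] at e2
    rw [e1, e2, hx10, hx20]
    ring
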